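/- Let I ⊆ ℂ[x,y] be a monomial ideal of finite colength which is normal, i.e. whose Rees algebra is integrally closed in its field of fractions. Then there exists a unique finitely supported function δ, defined on the set of pairs (α,β) of positive integers with gcd(α,β) = 1 and taking values in ℕ, such that I = ∏_{(α,β)} n_{α,β}^{δ(α,β)} (the product being over the finitely many pairs where δ is nonzero). -/

import Mathlib

open MvPolynomial

/-- A monomial ideal of `ℂ[x,y]`: an ideal generated by monomials `x^a y^b`. -/
def IsMonomialIdeal (I : Ideal (MvPolynomial (Fin 2) ℂ)) : Prop :=
  ∃ S : Set (ℕ × ℕ),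
    I = Ideal.span ((fun ab : ℕ × ℕ => (X 0 : MvPolynomial (Fin 2) ℂ) ^ ab.1 * X 1 ^ ab.2) '' S)

/-- `n_{α,β}`: the normalisation of the ideal `(x^α, y^β) ⊆ ℂ[x,y]`, i.e. the monomial ideal
generated by all monomials `x^a y^b` such that `(x^a y^b)^p ∈ (x^α, y^β)^p` for some `p ≥ 1`. -/
noncomputable def nIdeal (α β : ℕ) : Ideal (MvPolynomial (Fin 2) ℂ) :=
  Ideal.span {f : MvPolynomial (Fin 2) ℂ | ∃ a b : ℕ,
    f = X 0 ^ a * X 1 ^ b ∧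
    ∃ p : ℕ, 1 ≤ p ∧
      ((X 0 : MvPolynomial (Fin 2) ℂ) ^ a * X 1 ^ b) ^ p ∈
        (Ideal.span {(X 0 : MvPolynomial (Fin 2) ℂ) ^ α, X 1 ^ β}) ^ p}

open Pointwise

namespace NMF

abbrev R2 : Type := MvPolynomial (Fin 2) ℂ

noncomputable def M (x : ℕ × ℕ) : R2 := X 0 ^ x.1 * X 1 ^ x.2

noncomputable def d (x : ℕ × ℕ) : Fin 2 →₀ ℕ :=
  Finsupp.single 0 x.1 + Finsupp.single 1 x.2

lemma d_apply0 (x : ℕ × ℕ) : d x 0 = x.1 := by simp [d]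
lemma d_apply1 (x : ℕ × ℕ) : d x 1 = x.2 := by simp [d]

lemma d_le {x y : ℕ × ℕ} : d x ≤ d y ↔ x.1 ≤ y.1 ∧ x.2 ≤ y.2 := by
  constructor
  · intro h
    exact ⟨by simpa [d_apply0] using h 0, by simpa [d_apply1] using h 1⟩
  · intro h i
    fin_cases i
    · simpa [d_apply0] using h.1
    · simpa [d_apply1] using h.2

lemma d_inj {x y : ℕ × ℕ} (h : d x = d y) : x = y := by
  have h0 := congrArg (fun f => f 0) h
  have h1 := congrArg (fun f => f 1) h
  simp only [d_apply0, d_apply1] at h0 h1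
  exact Prod.ext h0 h1

lemma d_add (x y : ℕ × ℕ) : d (x + y) = d x + d y := by
  ext i
  fin_cases i <;> simp [d, Finsupp.single_apply]

lemma M_eq (x : ℕ × ℕ) : M x = monomial (d x) 1 := by
  rw [d, M, X_pow_eq_monomial, X_pow_eq_monomial, monomial_mul, one_mul]

lemma M_mul (x y : ℕ × ℕ) : M x * M y = M (x + y) := by
  rw [M_eq, M_eq, M_eq, monomial_mul, one_mul, d_add]

lemma M_zero : M 0 = 1 := by simp [M]

lemma M_pow (n : ℕ) (x : ℕ × ℕ) : M x ^ n = M (n • x) := by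
  induction n with
  | zero => simpa using M_zero.symm
  | succ k ih =>
      rw [pow_succ, ih, M_mul, succ_nsmul]

lemma M_ne_zero (x : ℕ × ℕ) : M x ≠ 0 := by
  rw [M_eq]
  exact fun h => one_ne_zero ((monomial_eq_zero).mp h)

def upin (x y : ℕ × ℕ) : Prop := x.1 ≤ y.1 ∧ x.2 ≤ y.2

lemma M_dvd {x y : ℕ × ℕ} (h : upin x y) : M x ∣ M y := by
  refine ⟨M (y.1 - x.1, y.2 - x.2), ?_⟩
  rw [M_mul]
  congr 1
  exact Prod.ext (by simp [Nat.add_sub_cancel' h.1]) (by simp [Nat.add_sub_cancel' h.2])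

noncomputable def sIdeal (S : Set (ℕ × ℕ)) : Ideal R2 := Ideal.span (M '' S)

lemma coeff_ne_zero_of_mem {S : Set (ℕ × ℕ)} {f : R2} (hf : f ∈ sIdeal S)
    {μ : Fin 2 →₀ ℕ} (h : coeff μ f ≠ 0) : ∃ s ∈ S, d s ≤ μ := by
  refine Submodule.span_induction
    (p := fun g _ => ∀ ν, coeff ν g ≠ 0 → ∃ s ∈ S, d s ≤ ν) ?_ ?_ ?_ ?_ hf μ h
  · rintro g ⟨s, hs, rfl⟩ μ hμ
    refine ⟨s, hs, ?_⟩
    rw [M_eq, coeff_monomial] at hμ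
    by_cases hds : d s = μ
    · exact hds ▸ le_refl _
    · simp [hds] at hμ
  · intro μ h; simp at h
  · intro g₁ g₂ _ _ ih₁ ih₂ μ hμ
    rw [coeff_add] at hμ
    by_cases h1 : coeff μ g₁ ≠ 0
    · exact ih₁ μ h1
    · push_neg at h1
      exact ih₂ μ (by rw [h1, zero_add] at hμ; exact hμ)
  · intro r g _ ih μ hμ
    have : ∃ pq ∈ Finset.HasAntidiagonal.antidiagonal μ, coeff pq.1 r * coeff pq.2 g ≠ 0 := by
      by_contra hc
      push_neg at hc
      exact hμ (by rw [smul_eq_mul, coeff_mul]; exact Finset.sum_eq_zero hc)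
    obtain ⟨⟨p, q⟩, hpq, hne⟩ := this
    have hq : coeff q g ≠ 0 := fun h => hne (by simp [h])
    obtain ⟨s, hs, hsle⟩ := ih q hq
    refine ⟨s, hs, hsle.trans ?_⟩
    have : p + q = μ := (Finset.HasAntidiagonal.mem_antidiagonal.mp hpq)
    exact this ▸ le_add_self

lemma mem_sIdeal {S : Set (ℕ × ℕ)} {x : ℕ × ℕ} : M x ∈ sIdeal S ↔ ∃ s ∈ S, upin s x := by
  constructor
  · intro h
    obtain ⟨s, hs, hle⟩ := coeff_ne_zero_of_mem h (μ := d x)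
      (by rw [M_eq, coeff_monomial]; simp)
    exact ⟨s, hs, d_le.mp hle⟩
  · rintro ⟨s, hs, hle⟩
    obtain ⟨g, hg⟩ := M_dvd hle
    rw [hg]
    exact Ideal.mul_mem_right _ _ (Ideal.subset_span ⟨s, hs, rfl⟩)

lemma sIdeal_le {S T : Set (ℕ × ℕ)} (h : ∀ s ∈ S, ∃ t ∈ T, upin t s) :
    sIdeal S ≤ sIdeal T := by
  rw [sIdeal, Ideal.span_le]
  rintro f ⟨s, hs, rfl⟩
  exact mem_sIdeal.mpr (h s hs)



def nSum : ℕ → Set (ℕ × ℕ) → Set (ℕ × ℕ)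
  | 0, _ => {0}
  | n+1, S => S + nSum n S

lemma image_add (S T : Set (ℕ × ℕ)) : M '' (S + T) = (M '' S) * (M '' T) := by
  ext f
  constructor
  · rintro ⟨x, hx, rfl⟩
    rw [Set.mem_add] at hx
    obtain ⟨s, hs, t, ht, rfl⟩ := hx
    exact ⟨M s, ⟨s, hs, rfl⟩, M t, ⟨t, ht, rfl⟩, M_mul s t⟩
  · rintro ⟨-, ⟨s, hs, rfl⟩, -, ⟨t, ht, rfl⟩, rfl⟩
    exact ⟨s + t, Set.mem_add.mpr ⟨s, hs, t, ht, rfl⟩, (M_mul s t).symm⟩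

lemma sIdeal_mul (S T : Set (ℕ × ℕ)) : sIdeal (S + T) = sIdeal S * sIdeal T := by
  rw [sIdeal, sIdeal, sIdeal, Ideal.span_mul_span', image_add]

lemma sIdeal_zero : sIdeal {(0 : ℕ × ℕ)} = ⊤ := by
  rw [sIdeal, Set.image_singleton, M_zero, Ideal.span_singleton_one]

lemma sIdeal_pow (S : Set (ℕ × ℕ)) (n : ℕ) : sIdeal S ^ n = sIdeal (nSum n S) := by
  induction n with
  | zero => rw [pow_zero, nSum, sIdeal_zero, Ideal.one_eq_top]
  | succ k ih => rw [pow_succ, ih, nSum, sIdeal_mul, mul_comm]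

-- congruence for sets
lemma sIdeal_congr {S T : Set (ℕ × ℕ)} (h : S = T) : sIdeal S = sIdeal T := by rw [h]

/-- the half-plane staircase -/
def N (α β : ℕ) : Set (ℕ × ℕ) := {x | α * β ≤ x.1 * β + x.2 * α}

lemma nSum_zero_mem (n : ℕ) (S : Set (ℕ × ℕ)) (h0 : (0:ℕ×ℕ) ∈ S) : (0:ℕ×ℕ) ∈ nSum n S := by
  induction n with
  | zero => exact rfl
  | succ k ih => exact Set.mem_add.mpr ⟨0, h0, 0, ih, by simp⟩

lemma nSum_add_mem {m n : ℕ} {S : Set (ℕ × ℕ)} {x y : ℕ × ℕ}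
    (hx : x ∈ nSum m S) (hy : y ∈ nSum n S) : x + y ∈ nSum (m + n) S := by
  induction m generalizing x with
  | zero =>
      have : x = 0 := hx
      subst this
      simpa using hy
  | succ k ih =>
      obtain ⟨s, hs, t, ht, rfl⟩ := Set.mem_add.mp hx
      have := ih ht
      have : s + (t + y) ∈ nSum (k + n + 1) S := Set.mem_add.mpr ⟨s, hs, t + y, this, rfl⟩
      have heq : k + n + 1 = k + 1 + n := by omega
      rw [heq] at this
      simpa [add_assoc] using this

lemma nSum_repeat_mem {n : ℕ} {S : Set (ℕ × ℕ)} {x : ℕ × ℕ} (hx : x ∈ S) :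
    n • x ∈ nSum n S := by
  induction n with
  | zero => simp [nSum]
  | succ k ih =>
      have : k • x + x ∈ nSum (k + 1) S :=
        nSum_add_mem ih (Set.mem_add.mpr ⟨x, hx, 0, rfl, add_zero x⟩)
      rw [succ_nsmul]
      exact this

lemma pairSet_eq (α β : ℕ) :
    M '' {((α:ℕ),(0:ℕ)), ((0:ℕ), β)} = {(X 0 : R2) ^ α, X 1 ^ β} := by
  rw [Set.image_insert_eq, Set.image_singleton]
  simp [M]

lemma span_pair_eq (α β : ℕ) :
    Ideal.span {(X 0 : R2) ^ α, X 1 ^ β} = sIdeal {((α:ℕ),(0:ℕ)), ((0:ℕ),β)} := by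
  rw [sIdeal, pairSet_eq]

lemma mem_nSum_pair {α β p i : ℕ} (hi : i ≤ p) :
    ((i*α, (p-i)*β) : ℕ×ℕ) ∈ nSum p {((α:ℕ),(0:ℕ)), ((0:ℕ),β)} := by
  induction p generalizing i with
  | zero =>
      have : i = 0 := Nat.le_zero.mp hi
      subst this
      simp [nSum]
  | succ k ih =>
      rcases Nat.eq_zero_or_pos i with h0 | hpos
      · subst h0
        refine Set.mem_add.mpr ⟨(0, β), Set.mem_insert_of_mem _ rfl, (0*α, (k-0)*β), ih (Nat.zero_le k), ?_⟩
        refine Prod.ext (by simp) ?_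
        show β + (k-0)*β = (k+1-0)*β
        simp [Nat.add_mul, Nat.add_comm]
      · obtain ⟨j, rfl⟩ : ∃ j, i = j + 1 := ⟨i - 1, by omega⟩
        refine Set.mem_add.mpr ⟨(α, 0), Set.mem_insert _ _, (j*α, (k-j)*β), ih (by omega), ?_⟩
        refine Prod.ext ?_ ?_
        · show α + j*α = (j+1)*α
          ring
        · show 0 + (k-j)*β = (k+1-(j+1))*β
          simp [Nat.succ_sub_succ]

lemma nSum_pair_dot {α β p : ℕ} {s : ℕ×ℕ} (hs : s ∈ nSum p {((α:ℕ),(0:ℕ)),((0:ℕ),β)}) :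
    s.1 * β + s.2 * α = p * (α * β) := by
  induction p generalizing s with
  | zero =>
      have : s = 0 := hs
      subst this; simp
  | succ k ih =>
      obtain ⟨t, ht, u, hu, rfl⟩ := Set.mem_add.mp hs
      have hu' := ih hu
      rcases ht with h | h
      · subst h
        show (α + u.1)*β + (0 + u.2)*α = (k+1) * (α * β)
        have h' : (k+1)*(α*β) = k*(α*β) + α*β := by ring
        rw [h', ← hu']
        ring
      · have : t = (0, β) := h
        subst this
        show (0 + u.1)*β + (β + u.2)*α = (k+1) * (α * β)
        have h' : (k+1)*(α*β) = k*(α*β) + α*β := by ring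
        rw [h', ← hu']
        ring

lemma smul_pair (p : ℕ) (x : ℕ × ℕ) : p • x = (p * x.1, p * x.2) := rfl

lemma cond_iff {α β : ℕ} (hα : 0 < α) (hβ : 0 < β) (x : ℕ × ℕ) :
    (∃ p : ℕ, 1 ≤ p ∧ (M x) ^ p ∈ (Ideal.span {(X 0 : R2) ^ α, X 1 ^ β}) ^ p)
      ↔ x ∈ N α β := by
  rw [span_pair_eq]
  constructor
  · rintro ⟨p, hp, hmem⟩
    rw [sIdeal_pow, M_pow] at hmem
    obtain ⟨s, hs, hle⟩ := mem_sIdeal.mp hmem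
    have hdot := nSum_pair_dot hs
    have h1 : s.1 ≤ p * x.1 := by simpa [smul_pair] using hle.1
    have h2 : s.2 ≤ p * x.2 := by simpa [smul_pair] using hle.2
    have hkey : p * (α*β) ≤ p * (x.1*β + x.2*α) := by nlinarith
    exact Nat.le_of_mul_le_mul_left hkey (by omega)
  · intro hx
    by_cases hc : α ≤ x.1
    · refine ⟨1, le_refl 1, ?_⟩
      rw [sIdeal_pow, M_pow]
      refine mem_sIdeal.mpr ⟨(α, 0), ?_, ?_, ?_⟩
      · refine Set.mem_add.mpr ⟨(α,0), Set.mem_insert _ _, 0, rfl, add_zero _⟩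
      · simpa [smul_pair] using hc
      · simp [smul_pair]
    · push_neg at hc
      refine ⟨α, hα, ?_⟩
      rw [sIdeal_pow, M_pow]
      refine mem_sIdeal.mpr ⟨(x.1 * α, (α - x.1) * β), mem_nSum_pair (le_of_lt hc), ?_, ?_⟩
      · simp [smul_pair, Nat.mul_comm]
      · show (α - x.1) * β ≤ (α • x).2
        rw [smul_pair]
        have hsub : (α - x.1) * β + x.1 * β = α * β := by
          rw [← Nat.add_mul, Nat.sub_add_cancel (le_of_lt hc)]
        have hx' : α * β ≤ x.1 * β + x.2 * α := hx
        have : x.2 * α = α * x.2 := Nat.mul_comm _ _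
        linarith

lemma nIdeal_eq {α β : ℕ} (hα : 0 < α) (hβ : 0 < β) : nIdeal α β = sIdeal (N α β) := by
  rw [nIdeal, sIdeal]
  congr 1
  ext f
  constructor
  · rintro ⟨a, b, rfl, p, hp, hmem⟩
    exact ⟨(a, b), (cond_iff hα hβ (a,b)).mp ⟨p, hp, hmem⟩, rfl⟩
  · rintro ⟨x, hx, rfl⟩
    obtain ⟨p, hp, hmem⟩ := (cond_iff hα hβ x).mpr hx
    exact ⟨x.1, x.2, rfl, p, hp, hmem⟩

lemma nSum_N_dot {α β e : ℕ} {s : ℕ×ℕ} (hs : s ∈ nSum e (N α β)) :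
    e * (α*β) ≤ s.1*β + s.2*α := by
  induction e generalizing s with
  | zero => simp
  | succ k ih =>
      obtain ⟨t, ht, u, hu, rfl⟩ := Set.mem_add.mp hs
      have h1 : α * β ≤ t.1*β + t.2*α := ht
      have h2 := ih hu
      show (k+1) * (α*β) ≤ (t.1 + u.1)*β + (t.2+u.2)*α
      have h' : (k+1)*(α*β) = k*(α*β) + α*β := by ring
      have h'' : (t.1 + u.1)*β + (t.2+u.2)*α = (t.1*β + t.2*α) + (u.1*β + u.2*α) := by ring
      rw [h', h'']
      omega

lemma nSum_N_cover {α β : ℕ} (hα : 0 < α) (hβ : 0 < β) :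
    ∀ e (x : ℕ × ℕ), e * (α*β) ≤ x.1*β + x.2*α → ∃ s ∈ nSum e (N α β), upin s x := by
  intro e
  induction e with
  | zero => exact fun x _ => ⟨0, rfl, Nat.zero_le _, Nat.zero_le _⟩
  | succ k ih =>
      intro x hx
      match k, hx with
      | 0, hx =>
          refine ⟨x, Set.mem_add.mpr ⟨x, ?_, 0, rfl, add_zero x⟩, le_refl _, le_refl _⟩
          show α * β ≤ _
          simpa using hx
      | (e'+1), hx =>
          by_cases hc : α ≤ x.1
          · obtain ⟨s, hs, hle⟩ := ih (x.1 - α, x.2) (by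
              have hsub : (x.1 - α) * β + α * β = x.1 * β := by
                rw [← Nat.add_mul, Nat.sub_add_cancel hc]
              have hx' : (e'+1+1) * (α*β) ≤ x.1*β + x.2*α := hx
              have : (e'+1+1) * (α*β) = (e'+1) * (α*β) + α*β := by ring
              simp only [this] at hx'
              show (e'+1) * (α*β) ≤ (x.1 - α)*β + x.2*α
              linarith)
            refine ⟨(α, 0) + s, Set.mem_add.mpr ⟨(α,0), ?_, s, hs, rfl⟩, ?_, ?_⟩
            · show α * β ≤ α*β + 0*α; simp
            · show α + s.1 ≤ x.1
              have := hle.1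
              omega
            · show 0 + s.2 ≤ x.2
              have := hle.2
              omega
          · push_neg at hc
            have hx1 : x.1 * β + β ≤ α * β := by
              calc x.1 * β + β = (x.1 + 1) * β := by ring
              _ ≤ α * β := Nat.mul_le_mul_right β hc
            have hb : β ≤ x.2 := by
              by_contra hb
              push_neg at hb
              have hthis : x.2 * α + α ≤ β * α := by
                calc x.2 * α + α = (x.2+1)*α := by ring
                _ ≤ β * α := Nat.mul_le_mul_right α hb
              have h3 : (e'+1+1) * (α*β) ≤ x.1*β + x.2*α := hx
              have hco : β * α = α * β := Nat.mul_comm β α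
              have h2ab : 2 * (α*β) ≤ (e'+1+1) * (α*β) := Nat.mul_le_mul_right _ (by omega)
              have h4 : (e'+1+1) * (α*β) = (e'+1+1) * (α*β) := rfl
              linarith
            obtain ⟨s, hs, hle⟩ := ih (x.1, x.2 - β) (by
              have hsub : (x.2 - β) * α + β * α = x.2 * α := by
                rw [← Nat.add_mul, Nat.sub_add_cancel hb]
              have hx' : (e'+1+1) * (α*β) ≤ x.1*β + x.2*α := hx
              have hmm : (e'+1+1) * (α*β) = (e'+1) * (α*β) + α*β := by ring
              simp only [hmm] at hx'
              show (e'+1) * (α*β) ≤ x.1*β + (x.2-β)*α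
              have hco : β * α = α * β := Nat.mul_comm β α
              linarith)
            refine ⟨(0, β) + s, Set.mem_add.mpr ⟨(0,β), ?_, s, hs, rfl⟩, ?_, ?_⟩
            · show α * β ≤ 0*β + β*α; simp [Nat.mul_comm]
            · show 0 + s.1 ≤ x.1
              have := hle.1
              omega
            · show β + s.2 ≤ x.2
              have := hle.2
              omega


section Stair
variable (Γ : Set (ℕ × ℕ)) (A : ℕ)

/-- Convex chain certificate: a list of edges (α, β, g). -/
def ChainOK : ℕ × ℕ → List (ℕ × ℕ × ℕ) → Prop
  | w, [] => w = (A, 0)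
  | w, e :: t =>
      w ∈ Γ ∧ 0 < e.1 ∧ 0 < e.2.1 ∧ 0 < e.2.2 ∧ Nat.Coprime e.1 e.2.1 ∧
      e.2.2 * e.2.1 ≤ w.2 ∧
      (∀ γ ∈ Γ, e.2.1 * w.1 + e.1 * w.2 ≤ e.2.1 * γ.1 + e.1 * γ.2) ∧
      ChainOK (w.1 + e.2.2 * e.1, w.2 - e.2.2 * e.2.1) t

set_option maxHeartbeats 1200000 in
lemma chain_exists (hA : (A, 0) ∈ Γ) (hAmin : ∀ a, (a,0) ∈ Γ → A ≤ a) :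
    ∀ b (w : ℕ×ℕ) (u v : ℕ), w ∈ Γ → w.1 ≤ A → w.2 = b →
    (∀ γ ∈ Γ, γ.2 < w.2 → w.1 < γ.1) →
    1 ≤ u →
    (∀ γ ∈ Γ, u * w.1 + v * w.2 ≤ u * γ.1 + v * γ.2) →
    (∀ γ ∈ Γ, γ.2 < w.2 → γ.1 ≤ A → (w.2 - γ.2) * v ≤ (γ.1 - w.1) * u) →
    ∃ L, ChainOK Γ A w L := by
  intro b
  induction b using Nat.strong_induction_on with
  | _ b ih =>
    intro w u v hw hwA hwb h3 h4 h5 h6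
    rcases Nat.eq_zero_or_pos w.2 with h0 | hpos
    · refine ⟨[], ?_⟩
      show w = (A, 0)
      have hA' : A ≤ w.1 := hAmin w.1 (by rw [← h0]; exact hw)
      exact Prod.ext (le_antisymm hwA hA') h0
    · have hCandA : (A, 0) ∈ Γ ∧ (A,0).2 < w.2 ∧ (A,0).1 ≤ A := ⟨hA, hpos, le_refl A⟩
      have hfin : {x : ℕ×ℕ | x ∈ Γ ∧ x.2 < w.2 ∧ x.1 ≤ A}.Finite := by
        refine Set.Finite.subset (Set.finite_Iic ((A, w.2) : ℕ×ℕ)) ?_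
        rintro x ⟨-, hx2, hx1⟩
        exact ⟨hx1, le_of_lt hx2⟩
      have hne : {x : ℕ×ℕ | x ∈ Γ ∧ x.2 < w.2 ∧ x.1 ≤ A}.Nonempty := ⟨(A,0), hCandA⟩
      obtain ⟨vst, hvstC, hmax⟩ := Set.exists_max_image _
        (fun x : ℕ×ℕ => ((w.2 : ℚ) - x.2) / ((x.1 : ℚ) - w.1)) hfin hne
      obtain ⟨hvΓ, hv2, hv1A⟩ := hvstC
      have hv1 : w.1 < vst.1 := h3 vst hvΓ hv2
      have hgp : 0 < Nat.gcd (vst.1 - w.1) (w.2 - vst.2) :=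
        Nat.gcd_pos_of_pos_left _ (by omega)
      set g := Nat.gcd (vst.1 - w.1) (w.2 - vst.2) with hgdef
      set α := (vst.1 - w.1) / g with hαdef
      set β := (w.2 - vst.2) / g with hβdef
      have hgα : g * α = vst.1 - w.1 := Nat.mul_div_cancel' (Nat.gcd_dvd_left _ _)
      have hgβ : g * β = w.2 - vst.2 := Nat.mul_div_cancel' (Nat.gcd_dvd_right _ _)
      have hαp : 0 < α := by
        rcases Nat.eq_zero_or_pos α with h | h
        · rw [h, Nat.mul_zero] at hgα; omega
        · exact h
      have hβp : 0 < β := by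
        rcases Nat.eq_zero_or_pos β with h | h
        · rw [h, Nat.mul_zero] at hgβ; omega
        · exact h
      have hcop : Nat.Coprime α β := Nat.coprime_div_gcd_div_gcd hgp
      have hgαZ : (g:ℤ) * α = (vst.1 : ℤ) - w.1 := by
        have h := hgα
        zify [le_of_lt hv1] at h
        exact h
      have hgβZ : (g:ℤ) * β = (w.2 : ℤ) - vst.2 := by
        have h := hgβ
        zify [le_of_lt hv2] at h
        exact h
      have hgz : (0:ℤ) < (g:ℤ) := by exact_mod_cast hgp
      -- slope maximality, integer form
      have hslopeZ : ∀ x : ℕ×ℕ, x ∈ Γ → x.2 < w.2 → x.1 ≤ A →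
          ((w.2:ℤ) - x.2) * ((vst.1:ℤ) - w.1) ≤ ((w.2:ℤ) - vst.2) * ((x.1:ℤ) - w.1) := by
        intro x hxΓ hx2 hx1A
        have hx1 : w.1 < x.1 := h3 x hxΓ hx2
        have h := hmax x ⟨hxΓ, hx2, hx1A⟩
        rw [div_le_div_iff₀ (sub_pos.mpr (by exact_mod_cast hx1))
          (sub_pos.mpr (by exact_mod_cast hv1))] at h
        exact_mod_cast h
      -- compat with incoming direction
      have hcompatZ : (β:ℤ) * v ≤ (α:ℤ) * u := by
        have h := h6 vst hvΓ hv2 hv1A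
        have hZ : ((w.2:ℤ) - vst.2) * v ≤ ((vst.1:ℤ) - w.1) * u := by
          zify [le_of_lt hv2, le_of_lt hv1] at h
          exact h
        rw [← hgαZ, ← hgβZ] at hZ
        have : (g:ℤ) * ((β:ℤ) * v) ≤ (g:ℤ) * ((α:ℤ) * u) := by ring_nf; ring_nf at hZ; linarith
        exact le_of_mul_le_mul_left this hgz
      -- supporting property of the new edge
      have hsuppZ : ∀ γ ∈ Γ, (β:ℤ) * w.1 + (α:ℤ) * w.2 ≤ (β:ℤ) * γ.1 + (α:ℤ) * γ.2 := by
        intro γ hγ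
        rcases lt_or_ge γ.2 w.2 with hlt | hge
        · rcases le_or_gt γ.1 A with hle | hgt
          · have hs := hslopeZ γ hγ hlt hle
            rw [← hgαZ, ← hgβZ] at hs
            have hγ1 : w.1 < γ.1 := h3 γ hγ hlt
            have hcancel : ((w.2:ℤ) - γ.2) * α ≤ (β:ℤ) * ((γ.1:ℤ) - w.1) := by
              have : (g:ℤ) * (((w.2:ℤ) - γ.2) * α) ≤ (g:ℤ) * ((β:ℤ) * ((γ.1:ℤ) - w.1)) := by
                ring_nf; ring_nf at hs; linarith
              exact le_of_mul_le_mul_left this hgz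
            have hγ2 : (0:ℤ) ≤ (γ.2 : ℤ) := Int.natCast_nonneg _
            linarith
          · have hs := hslopeZ (A, 0) hA hpos (le_refl A)
            rw [← hgαZ, ← hgβZ] at hs
            have hcancel : ((w.2:ℤ) - 0) * α ≤ (β:ℤ) * ((A:ℤ) - w.1) := by
              have : (g:ℤ) * (((w.2:ℤ) - 0) * α) ≤ (g:ℤ) * ((β:ℤ) * ((A:ℤ) - w.1)) := by
                ring_nf; ring_nf at hs; linarith
              exact le_of_mul_le_mul_left this hgz
            have hγ1 : (A:ℤ) < γ.1 := by exact_mod_cast hgt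
            have hβZ : (1:ℤ) ≤ β := by exact_mod_cast hβp
            have hγ2 : (0:ℤ) ≤ (γ.2:ℤ) := Int.natCast_nonneg _
            nlinarith
        · rcases le_or_gt w.1 γ.1 with hle | hgt
          · have e1 : (β:ℤ) * w.1 ≤ (β:ℤ) * γ.1 :=
              mul_le_mul_of_nonneg_left (by exact_mod_cast hle) (Int.natCast_nonneg _)
            have e2 : (α:ℤ) * w.2 ≤ (α:ℤ) * γ.2 :=
              mul_le_mul_of_nonneg_left (by exact_mod_cast hge) (Int.natCast_nonneg _)
            linarith
          · have h5' := h5 γ hγ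
            have h5Z : (u:ℤ) * w.1 + (v:ℤ) * w.2 ≤ (u:ℤ) * γ.1 + (v:ℤ) * γ.2 := by
              exact_mod_cast h5'
            have huz : (0:ℤ) < (u:ℤ) := by exact_mod_cast h4
            have key : (u:ℤ) * ((β:ℤ) * ((w.1:ℤ) - γ.1)) ≤ (u:ℤ) * ((α:ℤ) * ((γ.2:ℤ) - w.2)) := by
              have t1 : (β:ℤ) * ((u:ℤ) * ((w.1:ℤ) - γ.1)) ≤ (β:ℤ) * ((v:ℤ) * ((γ.2:ℤ) - w.2)) := by
                have : (u:ℤ) * ((w.1:ℤ) - γ.1) ≤ (v:ℤ) * ((γ.2:ℤ) - w.2) := by linarith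
                exact mul_le_mul_of_nonneg_left this (Int.natCast_nonneg _)
              have hge2 : (0:ℤ) ≤ (γ.2:ℤ) - w.2 := by
                have : (w.2:ℤ) ≤ γ.2 := by exact_mod_cast hge
                linarith
              have t2 : ((β:ℤ) * v) * ((γ.2:ℤ) - w.2) ≤ ((α:ℤ) * u) * ((γ.2:ℤ) - w.2) :=
                mul_le_mul_of_nonneg_right hcompatZ hge2
              nlinarith
            have := le_of_mul_le_mul_left key huz
            nlinarith
      have hsupp : ∀ γ ∈ Γ, β * w.1 + α * w.2 ≤ β * γ.1 + α * γ.2 := by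
        intro γ hγ
        exact_mod_cast hsuppZ γ hγ
      -- invariant: points lower than vst are strictly to the right
      have h3' : ∀ γ ∈ Γ, γ.2 < vst.2 → vst.1 < γ.1 := by
        intro γ hγ hγ2
        by_contra hcon
        push_neg at hcon
        rcases le_or_gt γ.1 A with hle | hgt
        · have hγ2w : γ.2 < w.2 := by omega
          have hs := hslopeZ γ hγ hγ2w hle
          have hγ1 : w.1 < γ.1 := h3 γ hγ hγ2w
          have e1 : ((w.2:ℤ) - γ.2) ≥ ((w.2:ℤ) - vst.2) + 1 := by
            have : (γ.2:ℤ) + 1 ≤ vst.2 := by exact_mod_cast hγ2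
            linarith
          have e2 : ((vst.1:ℤ) - w.1) ≥ ((γ.1:ℤ) - w.1) := by
            have : (γ.1:ℤ) ≤ vst.1 := by exact_mod_cast hcon
            linarith
          have e3 : ((γ.1:ℤ) - w.1) ≥ 1 := by
            have : (w.1:ℤ) + 1 ≤ γ.1 := by exact_mod_cast hγ1
            linarith
          have e4 : ((w.2:ℤ) - vst.2) ≥ 0 := by
            have : (vst.2:ℤ) ≤ w.2 := by exact_mod_cast (le_of_lt hv2)
            linarith
          nlinarith
        · omega
      -- new h6
      have h6' : ∀ γ ∈ Γ, γ.2 < vst.2 → γ.1 ≤ A →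
          (vst.2 - γ.2) * α ≤ (γ.1 - vst.1) * β := by
        intro γ hγ hγ2 hγA
        have hγ2w : γ.2 < w.2 := by omega
        have hs := hslopeZ γ hγ hγ2w hγA
        have hγ1 : vst.1 < γ.1 := h3' γ hγ hγ2
        rw [← hgαZ, ← hgβZ] at hs
        have key : (g:ℤ) * (((vst.2:ℤ) - γ.2) * α) ≤ (g:ℤ) * (((γ.1:ℤ) - vst.1) * β) := by
          have expand : ((w.2:ℤ) - γ.2) = ((g:ℤ)*β) + ((vst.2:ℤ) - γ.2) := by
            rw [hgβZ]; ring
          have expand2 : ((γ.1:ℤ) - w.1) = ((g:ℤ)*α) + ((γ.1:ℤ) - vst.1) := by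
            rw [hgαZ]; ring
          rw [expand, expand2] at hs
          nlinarith [hs]
        have := le_of_mul_le_mul_left key hgz
        zify [le_of_lt hγ2, le_of_lt hγ1]
        exact this
      -- supporting at the new pivot
      have hsupp' : ∀ γ ∈ Γ, β * vst.1 + α * vst.2 ≤ β * γ.1 + α * γ.2 := by
        intro γ hγ
        have heq : (β:ℤ) * vst.1 + (α:ℤ) * vst.2 = (β:ℤ) * w.1 + (α:ℤ) * w.2 := by
          linear_combination (α:ℤ) * hgβZ - (β:ℤ) * hgαZ
        have := hsuppZ γ hγ
        exact_mod_cast heq ▸ this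
      obtain ⟨L', hL'⟩ := ih vst.2 (by omega) vst β α hvΓ hv1A rfl h3' hβp hsupp' h6'
      refine ⟨(α, β, g) :: L', ?_⟩
      refine ⟨hw, hαp, hβp, hgp, hcop, ?_, hsupp, ?_⟩
      · show g * β ≤ w.2
        rw [hgβ]
        exact Nat.sub_le _ _
      have hwvst : ((w.1 + g * α : ℕ), (w.2 - g * β : ℕ)) = vst := by
        have h1 : w.1 + g * α = vst.1 := by rw [hgα]; omega
        have h2 : w.2 - g * β = vst.2 := by rw [hgβ]; omega
        rw [h1, h2]
      rw [hwvst]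
      exact hL'

end Stair

variable {Γ : Set (ℕ × ℕ)} {A : ℕ}

/-- sum-set of a chain -/
def SL : List (ℕ × ℕ × ℕ) → Set (ℕ × ℕ)
  | [] => {0}
  | e :: t => nSum e.2.2 (N e.1 e.2.1) + SL t

lemma bottom_mem : ∀ (L : List (ℕ × ℕ × ℕ)) (w : ℕ×ℕ), ChainOK Γ A w L →
    ((0 : ℕ), w.2) ∈ SL L := by
  intro L
  induction L with
  | nil =>
      intro w hC
      have : w = (A, 0) := hC
      rw [this]
      rfl
  | cons e t ih =>
      intro w hC
      obtain ⟨hwΓ, hα, hβ, hg, hcop, hgβw, hsupp, hrest⟩ := hC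
      have h1 : ((0:ℕ), e.2.2 * e.2.1) ∈ nSum e.2.2 (N e.1 e.2.1) := by
        have hN : ((0:ℕ), e.2.1) ∈ N e.1 e.2.1 := by
          show e.1 * e.2.1 ≤ 0 * e.2.1 + e.2.1 * e.1
          rw [Nat.zero_mul, Nat.zero_add, Nat.mul_comm]
        have := nSum_repeat_mem (n := e.2.2) hN
        simpa [smul_pair] using this
      have h2 := ih _ hrest
      refine Set.mem_add.mpr ⟨_, h1, _, h2, ?_⟩
      refine Prod.ext (by simp) ?_
      show e.2.2 * e.2.1 + (w.2 - e.2.2 * e.2.1) = w.2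
      omega

lemma chain_cover (hup : ∀ x y : ℕ×ℕ, x ∈ Γ → upin x y → y ∈ Γ) :
    ∀ (L : List (ℕ × ℕ × ℕ)) (w : ℕ×ℕ), ChainOK Γ A w L → ∀ γ ∈ Γ, w.1 ≤ γ.1 →
      ∃ s ∈ SL L, upin ((w.1 + s.1 : ℕ), s.2) γ := by
  intro L
  induction L with
  | nil =>
      intro w hC γ hγ hγ1
      have hw : w = (A, 0) := hC
      refine ⟨0, rfl, ?_, ?_⟩
      · simpa using hγ1
      · exact Nat.zero_le _
  | cons e t ih =>
      intro w hC γ hγ hγ1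
      obtain ⟨hwΓ, hα, hβ, hg, hcop, hgβw, hsupp, hrest⟩ := hC
      by_cases hcase : w.1 + e.2.2 * e.1 ≤ γ.1
      · obtain ⟨s₂, hs₂, hup2⟩ := ih _ hrest γ hγ hcase
        refine ⟨(e.2.2 * e.1, 0) + s₂, Set.mem_add.mpr ⟨(e.2.2 * e.1, 0), ?_, s₂, hs₂, rfl⟩, ?_, ?_⟩
        · have hN : ((e.1 : ℕ), (0:ℕ)) ∈ N e.1 e.2.1 := by
            show e.1 * e.2.1 ≤ e.1 * e.2.1 + 0 * e.1
            simp
          have := nSum_repeat_mem (n := e.2.2) hN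
          simpa [smul_pair] using this
        · show w.1 + (e.2.2 * e.1 + s₂.1) ≤ γ.1
          have := hup2.1
          omega
        · show 0 + s₂.2 ≤ γ.2
          have := hup2.2
          omega
      · push_neg at hcase
        have hsuppγ := hsupp γ hγ
        have hγ2 : w.2 - e.2.2 * e.2.1 ≤ γ.2 := by
          by_contra hcon
          push_neg at hcon
          -- γ.2 < w.2 - gβ; then β(γ1-w1) + αγ2 < β gα + α(w2-gβ) = αw2, contra hsuppγ
          have hZ : (e.2.1:ℤ) * w.1 + (e.1:ℤ) * w.2 ≤ (e.2.1:ℤ) * γ.1 + (e.1:ℤ) * γ.2 := by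
            exact_mod_cast hsuppγ
          have c1 : (γ.1:ℤ) ≤ (w.1:ℤ) + (e.2.2:ℤ) * e.1 - 1 := by
            have : (γ.1 :ℤ) + 1 ≤ (w.1:ℤ) + (e.2.2:ℤ)*e.1 := by exact_mod_cast hcase
            linarith
          have c2 : (γ.2:ℤ) ≤ (w.2:ℤ) - (e.2.2:ℤ) * e.2.1 - 1 := by
            have h1 : (γ.2 : ℤ) + 1 ≤ ((w.2 - e.2.2 * e.2.1 : ℕ) : ℤ) := by exact_mod_cast hcon
            have h2 : ((w.2 - e.2.2 * e.2.1 : ℕ) : ℤ) ≤ (w.2:ℤ) - (e.2.2:ℤ) * e.2.1 := by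
              rw [Nat.cast_sub hgβw]
              push_cast
              exact le_refl _
            linarith
          have hβ1 : (1:ℤ) ≤ (e.2.1:ℤ) := by exact_mod_cast hβ
          have hα1 : (1:ℤ) ≤ (e.1:ℤ) := by exact_mod_cast hα
          nlinarith
        have hcond : e.2.2 * (e.1 * e.2.1) ≤
            (γ.1 - w.1) * e.2.1 + (γ.2 - (w.2 - e.2.2 * e.2.1)) * e.1 := by
          zify [hγ1, hγ2]
          have h2 : ((w.2 - e.2.2 * e.2.1 : ℕ) : ℤ) = (w.2:ℤ) - (e.2.2:ℤ) * e.2.1 := by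
            rw [Nat.cast_sub hgβw]
            push_cast
            ring
          rw [h2]
          have hZ : (e.2.1:ℤ) * w.1 + (e.1:ℤ) * w.2 ≤ (e.2.1:ℤ) * γ.1 + (e.1:ℤ) * γ.2 := by
            exact_mod_cast hsuppγ
          nlinarith
        obtain ⟨s₁, hs₁, hs₁le⟩ := nSum_N_cover hα hβ e.2.2
          ((γ.1 - w.1 : ℕ), (γ.2 - (w.2 - e.2.2 * e.2.1) : ℕ)) hcond
        have hb := bottom_mem t _ hrest
        refine ⟨s₁ + ((0:ℕ), (w.2 - e.2.2 * e.2.1 : ℕ)),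
          Set.mem_add.mpr ⟨s₁, hs₁, _, hb, rfl⟩, ?_, ?_⟩
        · show w.1 + (s₁.1 + 0) ≤ γ.1
          have := hs₁le.1
          omega
        · show s₁.2 + (w.2 - e.2.2 * e.2.1) ≤ γ.2
          have := hs₁le.2
          omega

lemma two_blocks {w P : ℕ×ℕ} (hw : w ∈ Γ) (hP : P ∈ Γ) (q1 q2 : ℕ) :
    q1 • w + q2 • P ∈ nSum (q1 + q2) Γ :=
  nSum_add_mem (nSum_repeat_mem hw) (nSum_repeat_mem hP)

lemma chain_sub (hA : (A,0) ∈ Γ)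
    (hclosed : ∀ (x : ℕ×ℕ) (q : ℕ) (s : ℕ×ℕ), 1 ≤ q → s ∈ nSum q Γ → upin s (q • x) → x ∈ Γ)
    (hup : ∀ x y : ℕ×ℕ, x ∈ Γ → upin x y → y ∈ Γ) :
    ∀ (L : List (ℕ × ℕ × ℕ)) (w : ℕ×ℕ), ChainOK Γ A w L → ∀ s ∈ SL L,
      ((w.1 + s.1 : ℕ), s.2) ∈ Γ := by
  intro L
  induction L with
  | nil =>
      intro w hC s hs
      have hw : w = (A, 0) := hC
      have hs0 : s = 0 := hs
      rw [hw, hs0]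
      simpa using hA
  | cons e t ih =>
      intro w hC s hs
      obtain ⟨hwΓ, hα, hβ, hg, hcop, hgβw, hsupp, hrest⟩ := hC
      obtain ⟨s₁, hs₁, s₂, hs₂, rfl⟩ := Set.mem_add.mp hs
      have hP : ((w.1 + e.2.2 * e.1 + s₂.1 : ℕ), s₂.2) ∈ Γ := ih _ hrest s₂ hs₂
      by_cases hcase : e.2.2 * e.1 ≤ s₁.1
      · refine hup _ _ hP ⟨?_, ?_⟩
        · show w.1 + e.2.2*e.1 + s₂.1 ≤ w.1 + (s₁.1 + s₂.1)
          omega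
        · show s₂.2 ≤ s₁.2 + s₂.2
          omega
      · push_neg at hcase
        -- convexity step
        have hK1 : e.2.2 * (e.1 * e.2.1) ≤ s₁.1 * e.2.1 + s₁.2 * e.1 := nSum_N_dot hs₁
        have hK2 := hsupp _ hP
        have hq1pos : 0 < e.2.2 * e.1 - s₁.1 := by omega
        have hqsum : (e.2.2 * e.1 - s₁.1) + (s₁.1 + s₂.1) = e.2.2 * e.1 + s₂.1 := by omega
        have hblocks : (e.2.2 * e.1 - s₁.1) • w + (s₁.1 + s₂.1) • ((w.1 + e.2.2 * e.1 + s₂.1, s₂.2) : ℕ×ℕ)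
            ∈ nSum (e.2.2 * e.1 + s₂.1) Γ := by
          rw [← hqsum]
          exact two_blocks hwΓ hP _ _
        refine hclosed ((w.1 + (s₁.1 + s₂.1), s₁.2 + s₂.2))
          (e.2.2 * e.1 + s₂.1) _ (by omega) hblocks ⟨?_, ?_⟩
        · show (e.2.2 * e.1 - s₁.1) * w.1 + (s₁.1 + s₂.1) * (w.1 + e.2.2 * e.1 + s₂.1)
            ≤ (e.2.2 * e.1 + s₂.1) * (w.1 + (s₁.1 + s₂.1))
          zify [hcase.le]
          push_cast
          exact le_of_eq (by ring)
        · show (e.2.2 * e.1 - s₁.1) * w.2 + (s₁.1 + s₂.1) * s₂.2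
            ≤ (e.2.2 * e.1 + s₂.1) * (s₁.2 + s₂.2)
          zify [hcase.le]
          push_cast
          have hαZ : (0:ℤ) < (e.1:ℤ) := by exact_mod_cast hα
          have hGu : (0:ℤ) ≤ (e.2.2:ℤ)*e.1 - s₁.1 := by
            have : (s₁.1:ℤ) ≤ (e.2.2:ℤ)*e.1 := by exact_mod_cast hcase.le
            linarith
          have hGa : (0:ℤ) ≤ (e.2.2:ℤ)*e.1 + s₂.1 := by positivity
          have hK1Z : (e.2.2:ℤ) * ((e.1:ℤ) * e.2.1) ≤ (s₁.1:ℤ)*e.2.1 + (s₁.2:ℤ)*e.1 := by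
            exact_mod_cast hK1
          have hK2' : e.2.1 * w.1 + e.1 * w.2 ≤
              e.2.1 * (w.1 + e.2.2 * e.1 + s₂.1) + e.1 * s₂.2 := hK2
          have hK2Z : (e.2.1:ℤ)*w.1 + (e.1:ℤ)*w.2 ≤
              (e.2.1:ℤ)*((w.1:ℤ)+(e.2.2:ℤ)*e.1+(s₂.1:ℤ)) + (e.1:ℤ)*s₂.2 := by
            exact_mod_cast hK2'
          have t1 := mul_le_mul_of_nonneg_left hK2Z hGu
          have t2 := mul_le_mul_of_nonneg_left hK1Z hGa
          have main : (e.1:ℤ) * ((((e.2.2:ℤ)*e.1 - s₁.1))*w.2 + ((s₁.1:ℤ)+s₂.1)*s₂.2)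
              ≤ (e.1:ℤ) * ((((e.2.2:ℤ)*e.1 + s₂.1))*((s₁.2:ℤ)+s₂.2)) := by
            nlinarith [t1, t2]
          have hfin := le_of_mul_le_mul_left main hαZ
          linarith

lemma prod_sIdeal (s : Finset (ℕ×ℕ)) (F : (ℕ×ℕ) → Set (ℕ×ℕ)) :
    ∏ p ∈ s, sIdeal (F p) = sIdeal (∑ p ∈ s, F p) := by
  classical
  induction s using Finset.induction with
  | empty =>
      rw [Finset.prod_empty, Finset.sum_empty]
      rw [show (0 : Set (ℕ×ℕ)) = {0} from rfl, sIdeal_zero, Ideal.one_eq_top]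
  | @insert _ _ h ih =>
      rw [Finset.prod_insert h, Finset.sum_insert h, sIdeal_mul, ih]

lemma nSum_split {m n : ℕ} {S : Set (ℕ×ℕ)} :
    ∀ {s}, s ∈ nSum (m+n) S → ∃ x ∈ nSum m S, ∃ y ∈ nSum n S, x + y = s := by
  induction m with
  | zero =>
      intro s hs
      refine ⟨0, rfl, s, by simpa using hs, by simp⟩
  | succ k ih =>
      intro s hs
      have hidx : k + 1 + n = (k + n) + 1 := by omega
      rw [hidx] at hs
      obtain ⟨t, ht, u, hu, rfl⟩ := Set.mem_add.mp hs
      obtain ⟨x, hx, y, hy, rfl⟩ := ih hu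
      exact ⟨t + x, Set.mem_add.mpr ⟨t, ht, x, hx, rfl⟩, y, hy, by rw [add_assoc]⟩

lemma nSum_add_eq (m n : ℕ) (S : Set (ℕ×ℕ)) :
    nSum (m+n) S = nSum m S + nSum n S := by
  ext s
  constructor
  · intro hs
    obtain ⟨x, hx, y, hy, rfl⟩ := nSum_split hs
    exact Set.mem_add.mpr ⟨x, hx, y, hy, rfl⟩
  · intro hs
    obtain ⟨x, hx, y, hy, rfl⟩ := Set.mem_add.mp hs
    exact nSum_add_mem hx hy

noncomputable def δL (L : List (ℕ×ℕ×ℕ)) : (ℕ×ℕ) →₀ ℕ :=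
  (L.map (fun e => Finsupp.single (e.1, e.2.1) e.2.2)).sum

lemma Sdelta_SL : ∀ L : List (ℕ×ℕ×ℕ),
    (δL L).sum (fun p e => nSum e (N p.1 p.2)) = SL L := by
  intro L
  induction L with
  | nil =>
      show (0 : (ℕ×ℕ) →₀ ℕ).sum _ = {0}
      rw [Finsupp.sum_zero_index]
      rfl
  | cons e t ih =>
      show (Finsupp.single (e.1, e.2.1) e.2.2 + δL t).sum _ = _
      rw [Finsupp.sum_add_index' (fun a => rfl) (fun a b₁ b₂ => nSum_add_eq b₁ b₂ _)]
      rw [Finsupp.sum_single_index rfl, ih]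
      rfl

lemma support_δL : ∀ (L : List (ℕ×ℕ×ℕ)) (p : ℕ×ℕ), p ∈ (δL L).support →
    ∃ e ∈ L, p = (e.1, e.2.1) := by
  intro L
  induction L with
  | nil => intro p hp; simp [δL] at hp
  | cons e t ih =>
      intro p hp
      have : (δL (e :: t)) = Finsupp.single (e.1, e.2.1) e.2.2 + δL t := rfl
      rw [this] at hp
      rcases Finset.mem_union.mp (Finsupp.support_add hp) with h | h
      · refine ⟨e, List.mem_cons_self, ?_⟩
        have := Finsupp.support_single_subset h
        simpa using this
      · obtain ⟨f, hf, rfl⟩ := ih p h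
        exact ⟨f, List.mem_cons_of_mem _ hf, rfl⟩

lemma edges_ok : ∀ (L : List (ℕ×ℕ×ℕ)) (w : ℕ×ℕ), ChainOK Γ A w L →
    ∀ e ∈ L, 0 < e.1 ∧ 0 < e.2.1 ∧ Nat.Coprime e.1 e.2.1 := by
  intro L
  induction L with
  | nil => intro w _ e he; simp at he
  | cons e t ih =>
      intro w hC f hf
      obtain ⟨hwΓ, hα, hβ, hg, hcop, hgβw, hsupp, hrest⟩ := hC
      rcases List.mem_cons.mp hf with h | h
      · subst h; exact ⟨hα, hβ, hcop⟩
      · exact ih _ hrest f h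

lemma stair_exists {B : ℕ}
    (hup : ∀ x y : ℕ×ℕ, x ∈ Γ → upin x y → y ∈ Γ)
    (hclosed : ∀ (x : ℕ×ℕ) (q : ℕ) (s : ℕ×ℕ), 1 ≤ q → s ∈ nSum q Γ → upin s (q • x) → x ∈ Γ)
    (hA : (A,0) ∈ Γ) (hAmin : ∀ a, (a,0) ∈ Γ → A ≤ a)
    (hB : ((0:ℕ),B) ∈ Γ) (hBmin : ∀ b, ((0:ℕ),b) ∈ Γ → B ≤ b) :
    ∃ δ : (ℕ×ℕ) →₀ ℕ, (∀ p ∈ δ.support, 0 < p.1 ∧ 0 < p.2 ∧ Nat.gcd p.1 p.2 = 1) ∧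
      sIdeal Γ = sIdeal ((δ.sum fun p e => nSum e (N p.1 p.2) : Set (ℕ×ℕ))) := by
  have h3 : ∀ γ ∈ Γ, γ.2 < ((0:ℕ),B).2 → ((0:ℕ),B).1 < γ.1 := by
    intro γ hγ hlt
    by_contra hcon
    push_neg at hcon
    have hγ1 : γ.1 = 0 := by omega
    have : ((0:ℕ), γ.2) ∈ Γ := by
      rw [← hγ1]
      exact hγ
    have := hBmin _ this
    omega
  have h5 : ∀ γ ∈ Γ, 1 * ((0:ℕ),B).1 + 0 * ((0:ℕ),B).2 ≤ 1 * γ.1 + 0 * γ.2 := by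
    intro γ _
    simp
  have h6 : ∀ γ ∈ Γ, γ.2 < ((0:ℕ),B).2 → γ.1 ≤ A →
      (((0:ℕ),B).2 - γ.2) * 0 ≤ (γ.1 - ((0:ℕ),B).1) * 1 := by
    intro γ _ _ _
    simp
  obtain ⟨L, hL⟩ := chain_exists Γ A hA hAmin B ((0:ℕ),B) 1 0 hB (Nat.zero_le A) rfl
    h3 (le_refl 1) h5 h6
  refine ⟨δL L, ?_, ?_⟩
  · intro p hp
    obtain ⟨e, heL, rfl⟩ := support_δL L p hp
    obtain ⟨h1, h2, h3'⟩ := edges_ok L _ hL e heL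
    exact ⟨h1, h2, h3'⟩
  · rw [Sdelta_SL]
    apply le_antisymm
    · apply sIdeal_le
      intro γ hγ
      obtain ⟨sfound, hsfound, hupf⟩ := chain_cover hup L ((0:ℕ),B) hL γ hγ (Nat.zero_le _)
      refine ⟨sfound, hsfound, ?_, ?_⟩
      · have := hupf.1
        simpa using this
      · exact hupf.2
    · apply sIdeal_le
      intro sfound hsfound
      have := chain_sub hA hclosed hup L ((0:ℕ),B) hL sfound hsfound
      refine ⟨(0 + sfound.1, sfound.2), this, ?_, ?_⟩ <;> simp

-- ======================= uniqueness =======================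

/-- support function value -/
def V (δ : (ℕ×ℕ) →₀ ℕ) (u v : ℕ) : ℕ := δ.sum (fun p e => e * min (u*p.1) (v*p.2))

lemma dot_lower {α β u v : ℕ} (hα : 0 < α) (hβ : 0 < β) {x : ℕ×ℕ} (hx : x ∈ N α β) :
    min (u*α) (v*β) ≤ u*x.1 + v*x.2 := by
  have hN : α * β ≤ x.1 * β + x.2 * α := hx
  rcases le_total (u*α) (v*β) with h | h
  · rw [min_eq_left h]
    have key : (u*α)*β ≤ (u*x.1 + v*x.2)*β := by
      calc (u*α)*β = u*(α*β) := by ring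
      _ ≤ u*(x.1*β + x.2*α) := Nat.mul_le_mul_left u hN
      _ = (u*x.1)*β + (u*α)*x.2 := by ring
      _ ≤ (u*x.1)*β + (v*β)*x.2 := by
          have := Nat.mul_le_mul_right x.2 h
          omega
      _ = (u*x.1 + v*x.2)*β := by ring
    exact Nat.le_of_mul_le_mul_right key hβ
  · rw [min_eq_right h]
    have key : (v*β)*α ≤ (u*x.1 + v*x.2)*α := by
      calc (v*β)*α = v*(α*β) := by ring
      _ ≤ v*(x.1*β + x.2*α) := Nat.mul_le_mul_left v hN
      _ = (v*β)*x.1 + (v*x.2)*α := by ring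
      _ ≤ (u*α)*x.1 + (v*x.2)*α := by
          have := Nat.mul_le_mul_right x.1 h
          omega
      _ = (u*x.1 + v*x.2)*α := by ring
    exact Nat.le_of_mul_le_mul_right key hα

lemma dot_lower_nSum {α β u v e : ℕ} (hα : 0 < α) (hβ : 0 < β) :
    ∀ {x : ℕ×ℕ}, x ∈ nSum e (N α β) → e * min (u*α) (v*β) ≤ u*x.1 + v*x.2 := by
  induction e with
  | zero => intro x hx; simp
  | succ k ih =>
      intro x hx
      obtain ⟨t, ht, r, hr, rfl⟩ := Set.mem_add.mp hx
      have h1 := dot_lower hα hβ ht (u := u) (v := v)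
      have h2 := ih hr
      have : u*(t.1+r.1) + v*(t.2+r.2) = (u*t.1 + v*t.2) + (u*r.1 + v*r.2) := by ring
      rw [show ((t+r).1) = t.1 + r.1 from rfl, show ((t+r).2) = t.2 + r.2 from rfl, this]
      have : (k+1) * min (u*α) (v*β) = min (u*α) (v*β) + k * min (u*α) (v*β) := by ring
      omega

lemma sum_sets_bound (u v : ℕ) (s : Finset (ℕ×ℕ)) (F : (ℕ×ℕ) → Set (ℕ×ℕ)) (c : (ℕ×ℕ) → ℕ)
    (h : ∀ p ∈ s, ∀ y ∈ F p, c p ≤ u*y.1 + v*y.2) :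
    ∀ x ∈ ∑ p ∈ s, F p, (∑ p ∈ s, c p) ≤ u*x.1 + v*x.2 := by
  classical
  induction s using Finset.induction with
  | empty =>
      intro x hx
      have hx0 : x = (0:ℕ×ℕ) := hx
      subst hx0
      simp
  | @insert a s' hnotin ih =>
      rw [Finset.sum_insert hnotin, Finset.sum_insert hnotin]
      intro x hx
      obtain ⟨y, hy, z, hz, rfl⟩ := Set.mem_add.mp hx
      have h1 := h a (Finset.mem_insert_self a s') y hy
      have h2 := ih (fun p hp => h p (Finset.mem_insert_of_mem hp)) z hz
      have : u*(y+z).1 + v*(y+z).2 = (u*y.1 + v*y.2) + (u*z.1 + v*z.2) := by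
        show u*(y.1+z.1) + v*(y.2+z.2) = _
        ring
      omega

lemma sum_sets_attain (u v : ℕ) (s : Finset (ℕ×ℕ)) (F : (ℕ×ℕ) → Set (ℕ×ℕ)) (c : (ℕ×ℕ) → ℕ)
    (h : ∀ p ∈ s, ∃ y ∈ F p, u*y.1 + v*y.2 = c p) :
    ∃ x ∈ ∑ p ∈ s, F p, u*x.1 + v*x.2 = ∑ p ∈ s, c p := by
  classical
  induction s using Finset.induction with
  | empty =>
      exact ⟨0, rfl, by simp⟩
  | @insert a s' hnotin ih =>
      rw [Finset.sum_insert hnotin, Finset.sum_insert hnotin]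
      obtain ⟨y, hy, hyv⟩ := h a (Finset.mem_insert_self a s')
      obtain ⟨z, hz, hzv⟩ := ih (fun p hp => h p (Finset.mem_insert_of_mem hp))
      refine ⟨y + z, Set.mem_add.mpr ⟨y, hy, z, hz, rfl⟩, ?_⟩
      show u*(y.1+z.1) + v*(y.2+z.2) = _
      have : u*(y.1+z.1) + v*(y.2+z.2) = (u*y.1 + v*y.2) + (u*z.1 + v*z.2) := by ring
      omega

def ValidSupport (δ : (ℕ×ℕ) →₀ ℕ) : Prop :=
  ∀ p ∈ δ.support, 0 < p.1 ∧ 0 < p.2 ∧ Nat.gcd p.1 p.2 = 1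

lemma V_le_dot {δ : (ℕ×ℕ) →₀ ℕ} (hδ : ValidSupport δ) (u v : ℕ) :
    ∀ x ∈ δ.sum (fun p e => nSum e (N p.1 p.2)), V δ u v ≤ u*x.1 + v*x.2 := by
  apply sum_sets_bound
  intro p hp y hy
  exact dot_lower_nSum (hδ p hp).1 (hδ p hp).2.1 hy

lemma V_attained {δ : (ℕ×ℕ) →₀ ℕ} (hδ : ValidSupport δ) (u v : ℕ) :
    ∃ x ∈ δ.sum (fun p e => nSum e (N p.1 p.2)), u*x.1 + v*x.2 = V δ u v := by
  apply sum_sets_attain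
  intro p hp
  rcases le_total (u*p.1) (v*p.2) with h | h
  · refine ⟨(δ p) • ((p.1, (0:ℕ)) : ℕ×ℕ), nSum_repeat_mem ?_, ?_⟩
    · show p.1 * p.2 ≤ p.1 * p.2 + 0 * p.1
      simp
    · show u * (δ p * p.1) + v * (δ p * 0) = δ p * min (u*p.1) (v*p.2)
      rw [min_eq_left h]
      ring
  · refine ⟨(δ p) • (((0:ℕ), p.2) : ℕ×ℕ), nSum_repeat_mem ?_, ?_⟩
    · show p.1 * p.2 ≤ 0 * p.2 + p.2 * p.1
      simp [Nat.mul_comm]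
    · show u * (δ p * 0) + v * (δ p * p.2) = δ p * min (u*p.1) (v*p.2)
      rw [min_eq_right h]
      ring

lemma V_eq_of_sIdeal_eq {δ1 δ2 : (ℕ×ℕ) →₀ ℕ} (h1 : ValidSupport δ1) (h2 : ValidSupport δ2)
    (h : sIdeal (δ1.sum (fun p e => nSum e (N p.1 p.2)))
       = sIdeal (δ2.sum (fun p e => nSum e (N p.1 p.2)))) (u v : ℕ) :
    V δ1 u v = V δ2 u v := by
  have key : ∀ (δ δ' : (ℕ×ℕ) →₀ ℕ), ValidSupport δ → ValidSupport δ' →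
      sIdeal (δ.sum (fun p e => nSum e (N p.1 p.2))) = sIdeal (δ'.sum (fun p e => nSum e (N p.1 p.2))) →
      V δ u v ≤ V δ' u v := by
    intro δ δ' hδ hδ' heq
    obtain ⟨x, hx, hxv⟩ := V_attained hδ' u v
    have hxI : M x ∈ sIdeal (δ.sum (fun p e => nSum e (N p.1 p.2))) := by
      rw [heq]
      exact mem_sIdeal.mpr ⟨x, hx, le_refl _, le_refl _⟩
    obtain ⟨t, ht, htle⟩ := mem_sIdeal.mp hxI
    have hb := V_le_dot hδ u v t ht
    have : u*t.1 + v*t.2 ≤ u*x.1 + v*x.2 := by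
      have h1' := Nat.mul_le_mul_left u htle.1
      have h2' := Nat.mul_le_mul_left v htle.2
      omega
    omega
  exact le_antisymm (key δ1 δ2 h1 h2 h) (key δ2 δ1 h2 h1 h.symm)

lemma coprime_pair_eq {α β a b : ℕ} (hα : 0 < α) (hβ : 0 < β) (ha : 0 < a) (hb : 0 < b)
    (hq : Nat.gcd α β = 1) (hp : Nat.gcd a b = 1) (h : β * a = α * b) : a = α ∧ b = β := by
  have h1 : α ∣ a := by
    have hd : α ∣ β * a := Dvd.intro b h.symm
    exact Nat.Coprime.dvd_of_dvd_mul_left (show Nat.Coprime α β from hq) hd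
  have h2 : a ∣ α := by
    have hd : a ∣ α * b := by
      refine ⟨β, ?_⟩
      rw [← h]
      ring
    exact Nat.Coprime.dvd_of_dvd_mul_right (show Nat.Coprime a b from hp) hd
  have haα : a = α := Nat.dvd_antisymm h2 h1
  subst haα
  constructor
  · rfl
  · have : a * b = a * β := by
      rw [← h]
      ring
    exact (Nat.eq_of_mul_eq_mul_left ha this)

set_option maxHeartbeats 800000 in
lemma jump_term {α β a b n : ℕ} (hα : 0 < α) (hβ : 0 < β) (ha : 0 < a) (hb : 0 < b)
    (hq : Nat.gcd α β = 1) (hp : Nat.gcd a b = 1)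
    (hn : α * a + β * b < n) :
    min ((n*β+α)*a) ((n*α-β)*b) + min ((n*β-α)*a) ((n*α+β)*b)
      + (if (a, b) = (α, β) then α*α + β*β else 0)
      = 2 * min ((n*β)*a) ((n*α)*b) := by
  have hnα : β ≤ n*α := by nlinarith
  have hnβ : α ≤ n*β := by nlinarith
  rcases Nat.lt_trichotomy (β*a) (α*b) with hlt | heq | hgt
  · have hne : ¬ ((a,b) = (α,β)) := by
      intro hcon
      rw [Prod.mk.injEq] at hcon
      obtain ⟨rfl, rfl⟩ := hcon
      rw [Nat.mul_comm] at hlt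
      exact lt_irrefl _ hlt
    rw [if_neg hne]
    have hltZ : (β:ℤ)*a + 1 ≤ (α:ℤ)*b := by exact_mod_cast hlt
    have hnZ : ((α:ℤ)*a + (β:ℤ)*b) + 1 ≤ n := by exact_mod_cast hn
    have haZ : (1:ℤ) ≤ a := by exact_mod_cast ha
    have hbZ : (1:ℤ) ≤ b := by exact_mod_cast hb
    have hαZ : (1:ℤ) ≤ α := by exact_mod_cast hα
    have hβZ : (1:ℤ) ≤ β := by exact_mod_cast hβ
    have hnn : (0:ℤ) ≤ (n:ℤ) := by positivity
    have hint := mul_le_mul_of_nonneg_left hltZ hnn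
    have m0 : (n*β)*a ≤ (n*α)*b := by nlinarith [hint]
    have mp : (n*β+α)*a ≤ (n*α-β)*b := by
      zify [hnα]
      nlinarith [hint]
    have mm : (n*β-α)*a ≤ (n*α+β)*b := by
      zify [hnβ]
      nlinarith [hint]
    rw [min_eq_left m0, min_eq_left mp, min_eq_left mm]
    zify [hnβ]
    ring
  · obtain ⟨h1', h2'⟩ := coprime_pair_eq hα hβ ha hb hq hp heq
    subst h1'
    subst h2'
    rw [if_pos rfl]
    have mp : (n*a-b)*b ≤ (n*b+a)*a := by
      zify [hnα]
      nlinarith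
    have mm : (n*b-a)*a ≤ (n*a+b)*b := by
      zify [hnβ]
      nlinarith
    have m0 : (n*b)*a ≤ (n*a)*b := le_of_eq (by ring)
    rw [min_eq_right mp, min_eq_left mm, min_eq_left m0]
    zify [hnα, hnβ]
    ring
  · have hne : ¬ ((a,b) = (α,β)) := by
      intro hcon
      rw [Prod.mk.injEq] at hcon
      obtain ⟨rfl, rfl⟩ := hcon
      rw [Nat.mul_comm] at hgt
      exact lt_irrefl _ hgt
    rw [if_neg hne]
    have hltZ : (α:ℤ)*b + 1 ≤ (β:ℤ)*a := by exact_mod_cast hgt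
    have hnZ : ((α:ℤ)*a + (β:ℤ)*b) + 1 ≤ n := by exact_mod_cast hn
    have haZ : (1:ℤ) ≤ a := by exact_mod_cast ha
    have hbZ : (1:ℤ) ≤ b := by exact_mod_cast hb
    have hαZ : (1:ℤ) ≤ α := by exact_mod_cast hα
    have hβZ : (1:ℤ) ≤ β := by exact_mod_cast hβ
    have hnn : (0:ℤ) ≤ (n:ℤ) := by positivity
    have hint := mul_le_mul_of_nonneg_left hltZ hnn
    have m0 : (n*α)*b ≤ (n*β)*a := by nlinarith [hint]
    have mp : (n*α-β)*b ≤ (n*β+α)*a := by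
      zify [hnα]
      nlinarith [hint]
    have mm : (n*α+β)*b ≤ (n*β-α)*a := by
      zify [hnβ]
      nlinarith [hint]
    rw [min_eq_right m0, min_eq_right mp, min_eq_right mm]
    zify [hnα]
    ring

lemma V_def (δ : (ℕ×ℕ) →₀ ℕ) (u v : ℕ) :
    V δ u v = ∑ p ∈ δ.support, δ p * min (u*p.1) (v*p.2) := rfl

set_option maxHeartbeats 800000 in
lemma jump {δ : (ℕ×ℕ) →₀ ℕ} (hδ : ValidSupport δ) {α β n : ℕ}
    (hα : 0 < α) (hβ : 0 < β) (hqc : Nat.gcd α β = 1)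
    (hn : ∀ p ∈ δ.support, α * p.1 + β * p.2 < n) :
    V δ (n*β+α) (n*α-β) + V δ (n*β-α) (n*α+β) + δ (α, β) * (α*α+β*β)
      = 2 * V δ (n*β) (n*α) := by
  classical
  have hterm : ∀ p ∈ δ.support,
      δ p * min ((n*β+α)*p.1) ((n*α-β)*p.2) + δ p * min ((n*β-α)*p.1) ((n*α+β)*p.2)
        + (if p = (α,β) then δ p * (α*α+β*β) else 0)
      = 2 * (δ p * min ((n*β)*p.1) ((n*α)*p.2)) := by
    intro p hp
    obtain ⟨ha, hb, hcp⟩ := hδ p hp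
    have ht := jump_term hα hβ ha hb hqc hcp (hn p hp)
    by_cases hpq : p = (α, β)
    · have hcond : ((p.1, p.2) : ℕ×ℕ) = (α, β) := by rw [Prod.mk.eta]; exact hpq
      rw [if_pos hcond] at ht
      rw [if_pos hpq]
      calc δ p * min ((n*β+α)*p.1) ((n*α-β)*p.2) + δ p * min ((n*β-α)*p.1) ((n*α+β)*p.2)
            + δ p * (α*α+β*β)
          = δ p * (min ((n*β+α)*p.1) ((n*α-β)*p.2) + min ((n*β-α)*p.1) ((n*α+β)*p.2)
            + (α*α+β*β)) := by ring
        _ = δ p * (2 * min ((n*β)*p.1) ((n*α)*p.2)) := by rw [ht]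
        _ = 2 * (δ p * min ((n*β)*p.1) ((n*α)*p.2)) := by ring
    · have hcond : ¬ (((p.1, p.2) : ℕ×ℕ) = (α, β)) := by rw [Prod.mk.eta]; exact hpq
      rw [if_neg hcond, Nat.add_zero] at ht
      rw [if_neg hpq, Nat.add_zero]
      calc δ p * min ((n*β+α)*p.1) ((n*α-β)*p.2) + δ p * min ((n*β-α)*p.1) ((n*α+β)*p.2)
          = δ p * (min ((n*β+α)*p.1) ((n*α-β)*p.2) + min ((n*β-α)*p.1) ((n*α+β)*p.2)) := by
            ring
        _ = δ p * (2 * min ((n*β)*p.1) ((n*α)*p.2)) := by rw [ht]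
        _ = 2 * (δ p * min ((n*β)*p.1) ((n*α)*p.2)) := by ring
  have hsum := Finset.sum_congr rfl hterm
  rw [Finset.sum_add_distrib, Finset.sum_add_distrib] at hsum
  have hite : ∑ p ∈ δ.support, (if p = (α,β) then δ p * (α*α+β*β) else 0)
      = δ (α, β) * (α*α+β*β) := by
    rw [Finset.sum_ite_eq' δ.support (α,β) (fun p => δ p * (α*α+β*β))]
    by_cases hmem : (α, β) ∈ δ.support
    · rw [if_pos hmem]
    · rw [if_neg hmem, Finsupp.notMem_support_iff.mp hmem, Nat.zero_mul]
  rw [hite] at hsum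
  rw [V_def, V_def, V_def, Finset.mul_sum]
  exact hsum

lemma stair_unique {δ1 δ2 : (ℕ×ℕ) →₀ ℕ} (h1 : ValidSupport δ1) (h2 : ValidSupport δ2)
    (h : sIdeal (δ1.sum (fun p e => nSum e (N p.1 p.2)))
       = sIdeal (δ2.sum (fun p e => nSum e (N p.1 p.2)))) :
    δ1 = δ2 := by
  classical
  have hV := V_eq_of_sIdeal_eq h1 h2 h
  ext q
  by_cases hq : q ∈ δ1.support ∪ δ2.support
  · have hqprops : 0 < q.1 ∧ 0 < q.2 ∧ Nat.gcd q.1 q.2 = 1 := by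
      rcases Finset.mem_union.mp hq with hm | hm
      · exact h1 q hm
      · exact h2 q hm
    obtain ⟨hq1, hq2, hqc⟩ := hqprops
    set n := 1 + ∑ p ∈ δ1.support ∪ δ2.support, (q.1 * p.1 + q.2 * p.2) with hndef
    have hbig : ∀ p ∈ δ1.support ∪ δ2.support, q.1 * p.1 + q.2 * p.2 < n := by
      intro p hp
      have hle : q.1 * p.1 + q.2 * p.2 ≤ ∑ x ∈ δ1.support ∪ δ2.support, (q.1 * x.1 + q.2 * x.2) :=
        Finset.single_le_sum (f := fun x => q.1 * x.1 + q.2 * x.2) (fun i _ => Nat.zero_le _) hp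
      omega
    have hn1 : ∀ p ∈ δ1.support, q.1 * p.1 + q.2 * p.2 < n := fun p hp =>
      hbig p (Finset.mem_union_left _ hp)
    have hn2 : ∀ p ∈ δ2.support, q.1 * p.1 + q.2 * p.2 < n := fun p hp =>
      hbig p (Finset.mem_union_right _ hp)
    have j1 := jump h1 hq1 hq2 hqc hn1
    have j2 := jump h2 hq1 hq2 hqc hn2
    rw [hV (n*q.2+q.1) (n*q.1-q.2), hV (n*q.2-q.1) (n*q.1+q.2), hV (n*q.2) (n*q.1)] at j1
    have hKpos : 0 < q.1*q.1 + q.2*q.2 := by positivity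
    have heq : δ1 (q.1, q.2) * (q.1*q.1+q.2*q.2) = δ2 (q.1, q.2) * (q.1*q.1+q.2*q.2) := by
      omega
    have := Nat.eq_of_mul_eq_mul_right hKpos heq
    rw [Prod.mk.eta] at this
    exact this
  · rw [Finset.mem_union] at hq
    push_neg at hq
    rw [Finsupp.notMem_support_iff.mp hq.1, Finsupp.notMem_support_iff.mp hq.2]

lemma M_mem_pow (I : Ideal R2) : ∀ (q : ℕ) (s : ℕ×ℕ), s ∈ nSum q {x | M x ∈ I} → M s ∈ I ^ q := by
  intro q
  induction q with
  | zero =>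
      intro s hs
      have : s = 0 := hs
      rw [this, M_zero, pow_zero, Ideal.one_eq_top]
      trivial
  | succ k ih =>
      intro s hs
      obtain ⟨t, ht, u, hu, rfl⟩ := Set.mem_add.mp hs
      rw [← M_mul, pow_succ, mul_comm (I^k) I]
      exact Ideal.mul_mem_mul ht (ih u hu)

lemma pure_powers (I : Ideal R2) (S₀ : Set (ℕ×ℕ)) (hI : I = sIdeal S₀)
    (hfin : FiniteDimensional ℂ (R2 ⧸ I)) :
    (∃ a : ℕ, M ((a,0) : ℕ×ℕ) ∈ I) ∧ (∃ b : ℕ, M ((0,b) : ℕ×ℕ) ∈ I) := by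
  have key : ∀ k : Fin 2, ∃ (f : R2) (m : ℕ), f ∈ I ∧ coeff (Finsupp.single k m) f ≠ 0 := by
    intro k
    set n := Module.finrank ℂ (R2 ⧸ I) with hn
    have hdep : ¬ LinearIndependent ℂ (fun j : Fin (n+1) =>
        Ideal.Quotient.mkₐ ℂ I ((X k : R2) ^ (j:ℕ))) := by
      intro hLI
      have := hLI.fintype_card_le_finrank
      simp [Fintype.card_fin] at this
      omega
    obtain ⟨c, hc0, i, hci⟩ := Fintype.not_linearIndependent_iff.mp hdep
    refine ⟨∑ j : Fin (n+1), c j • (X k : R2) ^ (j:ℕ), i, ?_, ?_⟩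
    · have hmk : Ideal.Quotient.mkₐ ℂ I (∑ j : Fin (n+1), c j • (X k : R2) ^ (j:ℕ)) = 0 := by
        rw [map_sum]
        simpa [map_smul] using hc0
      have : Ideal.Quotient.mk I (∑ j : Fin (n+1), c j • (X k : R2) ^ (j:ℕ)) = 0 := hmk
      exact Ideal.Quotient.eq_zero_iff_mem.mp this
    · rw [coeff_sum]
      have : ∀ j : Fin (n+1), coeff (Finsupp.single k (i:ℕ)) (c j • (X k : R2)^(j:ℕ))
          = if j = i then c j else 0 := by
        intro j
        rw [coeff_smul, X_pow_eq_monomial, coeff_monomial]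
        by_cases hji : j = i
        · subst hji; simp
        · have : ¬ (Finsupp.single k (j:ℕ) = Finsupp.single k (i:ℕ)) := by
            intro hcon
            exact hji (Fin.ext (Finsupp.single_injective k hcon))
          simp [this, hji]
      rw [Finset.sum_congr rfl (fun j _ => this j), Finset.sum_ite_eq' Finset.univ i c,
        if_pos (Finset.mem_univ i)]
      exact hci
  constructor
  · obtain ⟨f, m, hfI, hco⟩ := key 0
    have hmem : f ∈ sIdeal S₀ := hI ▸ hfI
    obtain ⟨t, ht, htle⟩ := coeff_ne_zero_of_mem hmem hco
    refine ⟨m, ?_⟩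
    have h1 : t.1 ≤ m := by simpa [d_apply0] using htle 0
    have h2 : t.2 ≤ 0 := by
      have := htle 1
      simpa [d_apply1, Finsupp.single_apply] using this
    rw [hI]
    exact mem_sIdeal.mpr ⟨t, ht, h1, by omega⟩
  · obtain ⟨f, m, hfI, hco⟩ := key 1
    have hmem : f ∈ sIdeal S₀ := hI ▸ hfI
    obtain ⟨t, ht, htle⟩ := coeff_ne_zero_of_mem hmem hco
    refine ⟨m, ?_⟩
    have h1 : t.1 ≤ 0 := by
      have := htle 0
      simpa [d_apply0, Finsupp.single_apply] using this
    have h2 : t.2 ≤ m := by simpa [d_apply1] using htle 1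
    rw [hI]
    exact mem_sIdeal.mpr ⟨t, ht, by omega, h2⟩

lemma prod_nIdeal {δ : (ℕ×ℕ) →₀ ℕ} (hδ : ValidSupport δ) :
    ∏ p ∈ δ.support, nIdeal p.1 p.2 ^ δ p
      = sIdeal (δ.sum fun p e => nSum e (N p.1 p.2)) := by
  rw [Finsupp.sum, ← prod_sIdeal]
  apply Finset.prod_congr rfl
  intro p hp
  rw [nIdeal_eq (hδ p hp).1 (hδ p hp).2.1, sIdeal_pow]

set_option maxHeartbeats 1000000 in
set_option synthInstance.maxHeartbeats 1000000 in
lemma mem_of_pow_mem (I : Ideal R2) (hnormal : IsIntegrallyClosed ↥(reesAlgebra I))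
    {c : R2} (hc : c ∈ I) (hc0 : c ≠ 0)
    {m : R2} {p : ℕ} (hp : 1 ≤ p) (hm : m ^ p ∈ I ^ p) : m ∈ I := by
  classical
  have hnum : (Polynomial.C (c*m) * Polynomial.X : Polynomial R2) ∈ reesAlgebra I := by
    rw [mem_reesAlgebra_iff]
    intro i
    match i with
    | 0 => simp
    | 1 =>
        simpa [Polynomial.coeff_C_mul, pow_one] using Ideal.mul_mem_right m I hc
    | (k+2) => simp [Polynomial.coeff_C_mul, Polynomial.coeff_X]
  have hdenmem : (Polynomial.C c : Polynomial R2) ∈ reesAlgebra I := by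
    rw [mem_reesAlgebra_iff]
    intro i
    match i with
    | 0 => simp
    | (k+1) => simp [Polynomial.coeff_C]
  have hwmem : (Polynomial.C (m^p) * Polynomial.X ^ p : Polynomial R2) ∈ reesAlgebra I := by
    rw [mem_reesAlgebra_iff]
    intro i
    simp only [Polynomial.coeff_C_mul, Polynomial.coeff_X_pow]
    by_cases h : i = p
    · subst h; simpa using hm
    · simp [h]
  let T := ↥(reesAlgebra I)
  let num : T := ⟨_, hnum⟩
  let den : T := ⟨_, hdenmem⟩
  let w : T := ⟨_, hwmem⟩
  have hCc0 : (Polynomial.C c : Polynomial R2) ≠ 0 := by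
    simpa using hc0
  have hden0 : den ≠ 0 := by
    intro h
    exact hCc0 (congrArg Subtype.val h)
  have hkeyT : num ^ p = w * den ^ p := by
    apply Subtype.ext
    push_cast [SubmonoidClass.coe_pow]
    show (Polynomial.C (c*m) * Polynomial.X)^p = Polynomial.C (m^p) * Polynomial.X ^ p * (Polynomial.C c)^p
    calc (Polynomial.C (c*m) * Polynomial.X)^p
        = Polynomial.C ((c*m)^p) * Polynomial.X ^ p := by rw [mul_pow, Polynomial.C_pow]
      _ = Polynomial.C (m^p) * Polynomial.X ^ p * Polynomial.C c ^ p := by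
          rw [mul_pow c m, Polynomial.C_mul, Polynomial.C_pow]
          ring
  set K := FractionRing T
  set φ := algebraMap T K with hφ
  have hφden : φ den ≠ 0 := fun h => hden0 (IsFractionRing.injective T K (h.trans (map_zero φ).symm))
  set u : K := φ num / φ den with hu
  have hup : u ^ p = φ w := by
    rw [hu, div_pow, ← map_pow, ← map_pow, hkeyT, map_mul]
    exact mul_div_cancel_right₀ _ (by rw [map_pow]; exact pow_ne_zero _ hφden)
  have hint : IsIntegral T u := by
    refine ⟨Polynomial.X ^ p - Polynomial.C w, Polynomial.monic_X_pow_sub_C _ (by omega), ?_⟩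
    simp [Polynomial.eval₂_sub, hup, hφ]
  obtain ⟨y, hy⟩ := IsIntegrallyClosed.isIntegral_iff.mp hint
  have hyden : y * den = num := by
    apply IsFractionRing.injective T K
    rw [map_mul, hy, hu]
    exact div_mul_cancel₀ _ hφden
  have hyval : (y : Polynomial R2) * Polynomial.C c = Polynomial.C (c*m) * Polynomial.X :=
    congrArg Subtype.val hyden
  have hyv : (y : Polynomial R2) = Polynomial.C m * Polynomial.X := by
    apply mul_left_cancel₀ hCc0
    rw [mul_comm ((y : Polynomial R2)) _] at hyval
    rw [hyval, Polynomial.C_mul]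
    ring
  have hmem : (Polynomial.C m * Polynomial.X : Polynomial R2) ∈ reesAlgebra I := by
    rw [← hyv]; exact y.2
  rw [mem_reesAlgebra_iff] at hmem
  have := hmem 1
  simpa [Polynomial.coeff_C_mul, pow_one] using this

end NMF

open NMF

/-- **Unique factorisation of normal monomial ideals.** Every normal monomial ideal
`I ⊆ ℂ[x,y]` of finite colength factors uniquely as a product `∏ n_{α,β}^{δ(α,β)}`
over finitely many coprime pairs `(α,β)` of positive integers. -/
theorem normal_monomial_ideal_factorisation (I : Ideal (MvPolynomial (Fin 2) ℂ))
    (hmon : IsMonomialIdeal I)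
    (hfin : FiniteDimensional ℂ (MvPolynomial (Fin 2) ℂ ⧸ I))
    (hnormal : IsIntegrallyClosed ↥(reesAlgebra I)) :
    ∃! δ : (ℕ × ℕ) →₀ ℕ,
      (∀ p ∈ δ.support, 0 < p.1 ∧ 0 < p.2 ∧ Nat.gcd p.1 p.2 = 1) ∧
      I = ∏ p ∈ δ.support, nIdeal p.1 p.2 ^ δ p := by
  classical
  obtain ⟨S₀, hS₀⟩ := hmon
  have hI : I = sIdeal S₀ := hS₀
  set Γ : Set (ℕ×ℕ) := {x | M x ∈ I} with hΓdef
  have hup : ∀ x y : ℕ×ℕ, x ∈ Γ → upin x y → y ∈ Γ := by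
    intro x y hx hxy
    obtain ⟨g, hg⟩ := M_dvd hxy
    show M y ∈ I
    rw [hg]
    exact Ideal.mul_mem_right _ _ hx
  have hIΓ : I = sIdeal Γ := by
    apply le_antisymm
    · rw [hI]
      apply Ideal.span_le.mpr
      rintro f ⟨s, hs, rfl⟩
      apply Ideal.subset_span
      refine ⟨s, ?_, rfl⟩
      show M s ∈ I
      rw [hI]
      exact Ideal.subset_span ⟨s, hs, rfl⟩
    · apply Ideal.span_le.mpr
      rintro f ⟨x, hx, rfl⟩
      exact hx
  obtain ⟨⟨a0, ha0⟩, ⟨b0, hb0⟩⟩ := pure_powers I S₀ hI hfin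
  have hexA : ∃ a, ((a, 0) : ℕ×ℕ) ∈ Γ := ⟨a0, ha0⟩
  have hexB : ∃ b, ((0, b) : ℕ×ℕ) ∈ Γ := ⟨b0, hb0⟩
  set A := Nat.find hexA with hAdef
  set B := Nat.find hexB with hBdef
  have hA : ((A,0) : ℕ×ℕ) ∈ Γ := Nat.find_spec hexA
  have hB : ((0,B) : ℕ×ℕ) ∈ Γ := Nat.find_spec hexB
  have hAmin : ∀ a, ((a,0):ℕ×ℕ) ∈ Γ → A ≤ a := fun a ha => Nat.find_le ha
  have hBmin : ∀ b, ((0,b):ℕ×ℕ) ∈ Γ → B ≤ b := fun b hb => Nat.find_le hb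
  have hc : M ((A,0) : ℕ×ℕ) ∈ I := hA
  have hc0 : M ((A,0) : ℕ×ℕ) ≠ 0 := M_ne_zero _
  have hclosed : ∀ (x : ℕ×ℕ) (q : ℕ) (s : ℕ×ℕ), 1 ≤ q → s ∈ nSum q Γ →
      upin s (q • x) → x ∈ Γ := by
    intro x q s hq hs hle
    have hs' : M s ∈ I ^ q := M_mem_pow I q s hs
    obtain ⟨g, hg⟩ := M_dvd hle
    have hpow : M x ^ q ∈ I ^ q := by
      rw [M_pow, hg]
      exact Ideal.mul_mem_right _ _ hs'
    show M x ∈ I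
    exact mem_of_pow_mem I hnormal hc hc0 hq hpow
  obtain ⟨δ, hδsupp, hδeq⟩ :=
    stair_exists (Γ := Γ) (A := A) (B := B) hup hclosed hA hAmin hB hBmin
  have hδval : ValidSupport δ := hδsupp
  refine ⟨δ, ⟨hδsupp, ?_⟩, ?_⟩
  · rw [prod_nIdeal hδval]
    exact hIΓ.trans hδeq
  · rintro y ⟨hysupp, hyI⟩
    apply stair_unique hysupp hδval
    have h1 : sIdeal (y.sum fun p e => nSum e (N p.1 p.2)) = I := by
      rw [← prod_nIdeal hysupp]
      exact hyI.symm
    have h2 : I = sIdeal (δ.sum fun p e => nSum e (N p.1 p.2)) := hIΓ.trans hδeq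
    exact h1.trans h2
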